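/- Let $0 < d \le 1 \le u$ with $u \ne d$, and set $\tilde{k}_0(n,u,d) = \lfloor n \ln(1/d)/\ln(u/d) \rfloor$. Then $B(n,u,d) = (1/2)^{n-1} \sum_{k=\tilde{k}_0(n,u,d)+1}^{n} \binom{n}{k}$ converges, as $n \to \infty$, to $0$ if $ud < 1$, to $1$ if $ud = 1$, and to $2$ if $ud > 1$. -/

import Mathlib

open Filter

/-- Threshold separating losing from winning numbers of heads. -/
noncomputable def ktilde (n : ℕ) (u d : ℝ) : ℕ :=
  ⌊(n : ℝ) * Real.log (1/d) / Real.log (u/d)⌋₊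

/-- Twice the probability that a Binomial(n,1/2) random variable exceeds the threshold. -/
noncomputable def B (n : ℕ) (u d : ℝ) : ℝ :=
  (1/2 : ℝ)^(n-1) * ∑ k ∈ Finset.Icc (ktilde n u d + 1) n, (n.choose k : ℝ)

open Finset

lemma wpt_sum_choose (n : ℕ) : ∑ k ∈ range (n+1), (n.choose k : ℝ) = 2^n := by
  exact_mod_cast congrArg (Nat.cast : ℕ → ℝ) (Nat.sum_range_choose n)

lemma wpt_S1 (n : ℕ) : 2 * ∑ k ∈ range (n+1), (k:ℝ) * n.choose k = n * 2^n := by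
  have hrefl := Finset.sum_range_reflect (fun k => (k:ℝ) * n.choose k) (n+1)
  have hs : ∑ k ∈ range (n+1),
      ((k:ℝ) * n.choose k + ((n + 1 - 1 - k : ℕ):ℝ) * n.choose (n+1-1-k)) = (n:ℝ) * 2^n := by
    have h : ∀ k ∈ range (n+1),
        (k:ℝ) * n.choose k + ((n + 1 - 1 - k : ℕ):ℝ) * n.choose (n+1-1-k)
          = (n:ℝ) * n.choose k := by
      intro k hk
      have hk' : k ≤ n := Nat.lt_succ_iff.mp (Finset.mem_range.mp hk)
      have h1 : n + 1 - 1 - k = n - k := by omega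
      rw [h1, Nat.choose_symm hk', Nat.cast_sub hk']
      ring
    rw [Finset.sum_congr rfl h, ← Finset.mul_sum, wpt_sum_choose]
  rw [Finset.sum_add_distrib, hrefl] at hs
  linarith

lemma wpt_S2 (n : ℕ) : 4 * ∑ k ∈ range (n+1), (k:ℝ)^2 * n.choose k = n * (n+1) * 2^n := by
  cases n with
  | zero => simp
  | succ m =>
    have key : ∑ k ∈ range (m+2), (k:ℝ)^2 * (m+1).choose k
        = (m+1) * (∑ j ∈ range (m+1), (j:ℝ) * m.choose j + 2^m) := by
      rw [Finset.sum_range_succ']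
      have h : ∀ i ∈ range (m+1), ((i+1:ℕ):ℝ)^2 * (m+1).choose (i+1)
          = (m+1) * ((i:ℝ) * m.choose i + m.choose i) := by
        intro i hi
        have habs : ((m:ℝ)+1) * m.choose i = (m+1).choose (i+1) * ((i:ℝ)+1) := by
          exact_mod_cast congrArg (Nat.cast : ℕ → ℝ) (Nat.add_one_mul_choose_eq m i)
        push_cast
        nlinarith [habs]
      rw [Finset.sum_congr rfl h, ← Finset.mul_sum]
      push_cast
      rw [Finset.sum_add_distrib, wpt_sum_choose]
      ring
    rw [key]
    have h1 := wpt_S1 m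
    push_cast
    linear_combination 2*((m:ℝ)+1)*h1

lemma wpt_var (n : ℕ) : ∑ k ∈ range (n+1), (2*(k:ℝ) - (n:ℝ))^2 * (n.choose k : ℝ) = (n:ℝ) * 2^n := by
  have e : ∀ k ∈ range (n+1), (2*(k:ℝ)-(n:ℝ))^2 * (n.choose k:ℝ)
      = 4 * ((k:ℝ)^2 * (n.choose k:ℝ)) - 4*(n:ℝ)*((k:ℝ)*(n.choose k:ℝ)) + (n:ℝ)^2 * (n.choose k:ℝ) := by
    intro k _; ring
  rw [Finset.sum_congr rfl e]
  rw [Finset.sum_add_distrib, Finset.sum_sub_distrib, ← Finset.mul_sum, ← Finset.mul_sum,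
    ← Finset.mul_sum]
  have h1 := wpt_S1 n
  have h2 := wpt_S2 n
  have h0 := wpt_sum_choose n
  linear_combination h2 - 2*(n:ℝ)*h1 + (n:ℝ)^2*h0


lemma wpt_cheb (n : ℕ) (hn : 1 ≤ n) (s : Finset ℕ) (hs : s ⊆ range (n+1)) {c : ℝ} (hc : 0 < c)
    (h : ∀ k ∈ s, c * n ≤ |2*(k:ℝ) - n|) :
    ∑ k ∈ s, (n.choose k : ℝ) ≤ 2^n / (c^2 * n) := by
  have hn' : (0:ℝ) < n := by exact_mod_cast hn
  have key : (c*n)^2 * ∑ k ∈ s, (n.choose k : ℝ) ≤ n * 2^n := by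
    calc (c*n)^2 * ∑ k ∈ s, (n.choose k:ℝ) = ∑ k ∈ s, (c*n)^2 * (n.choose k:ℝ) := by
          rw [Finset.mul_sum]
    _ ≤ ∑ k ∈ s, (2*(k:ℝ)-(n:ℝ))^2 * (n.choose k:ℝ) := by
        apply Finset.sum_le_sum
        intro k hk
        have h1 := h k hk
        have h2 : (c*(n:ℝ))^2 ≤ (2*(k:ℝ)-(n:ℝ))^2 := by
          have h3 := sq_abs (2*(k:ℝ)-(n:ℝ))
          nlinarith [abs_nonneg (2*(k:ℝ)-(n:ℝ)), mul_pos hc hn']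
        have h4 : (0:ℝ) ≤ (n.choose k:ℝ) := Nat.cast_nonneg _
        nlinarith
    _ ≤ ∑ k ∈ range (n+1), (2*(k:ℝ)-(n:ℝ))^2 * (n.choose k:ℝ) := by
        apply Finset.sum_le_sum_of_subset_of_nonneg hs
        intros; positivity
    _ = n * 2^n := wpt_var n
  rw [le_div_iff₀ (by positivity)]
  nlinarith [key, Finset.sum_nonneg (fun k (_ : k ∈ s) => (Nat.cast_nonneg (n.choose k) : (0:ℝ) ≤ n.choose k))]

lemma wpt_reflect (n m : ℕ) :
    ∑ k ∈ Finset.Icc (m+1) n, (n.choose k : ℝ) = ∑ k ∈ range (n - m), (n.choose k : ℝ) := by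
  apply Finset.sum_nbij' (fun k => n - k) (fun k => n - k)
  · intro a ha; rw [Finset.mem_Icc] at ha; rw [Finset.mem_range]; omega
  · intro a ha; rw [Finset.mem_range] at ha; rw [Finset.mem_Icc]; omega
  · intro a ha; rw [Finset.mem_Icc] at ha; omega
  · intro a ha; rw [Finset.mem_range] at ha; omega
  · intro a ha; rw [Finset.mem_Icc] at ha
    rw [Nat.choose_symm ha.2]

lemma wpt_split (n m : ℕ) (h : m ≤ n) :
    ∑ k ∈ range (m+1), (n.choose k:ℝ) + ∑ k ∈ Finset.Icc (m+1) n, (n.choose k:ℝ) = 2^n := by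
  rw [← Finset.Ico_add_one_right_eq_Icc (m+1) n, Finset.range_eq_Ico,
    Finset.sum_Ico_consecutive _ (by omega) (by omega), ← Finset.range_eq_Ico]
  exact wpt_sum_choose n

lemma wpt_centralBinom_sq (j : ℕ) : (j+1) * (Nat.centralBinom j)^2 ≤ 16^j := by
  induction j with
  | zero => simp [Nat.centralBinom]
  | succ m ih =>
    have h := Nat.succ_mul_centralBinom_succ m
    have key : (m+1)^2 * ((m+2) * Nat.centralBinom (m+1)^2) ≤ (m+1)^2 * 16^(m+1) := by
      calc (m+1)^2 * ((m+2) * Nat.centralBinom (m+1)^2)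
          = (m+2) * ((m+1) * Nat.centralBinom (m+1))^2 := by ring
      _ = (m+2) * (2*(2*m+1))^2 * Nat.centralBinom m^2 := by rw [h]; ring
      _ ≤ 16*(m+1)^2 * ((m+1) * Nat.centralBinom m^2) := by nlinarith [Nat.centralBinom m]
      _ ≤ 16*(m+1)^2 * 16^m := Nat.mul_le_mul_left _ ih
      _ = (m+1)^2 * 16^(m+1) := by ring
    exact Nat.le_of_mul_le_mul_left key (by positivity)

lemma wpt_choose_half_sq (n : ℕ) : (n.choose (n/2))^2 * (n+1) ≤ 2 * 4^n := by
  have h16 : ∀ j : ℕ, (4:ℕ)^(j+j) = 16^j := by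
    intro j
    rw [show j + j = 2*j by omega, pow_mul]
    norm_num
  rcases Nat.even_or_odd n with ⟨j, hj⟩ | ⟨j, hj⟩
  · subst hj
    have h := wpt_centralBinom_sq j
    have h2 : (j+j)/2 = j := by omega
    have h3 : (j+j).choose j = Nat.centralBinom j := by
      rw [Nat.centralBinom]; congr 1; omega
    rw [h2, h3, h16 j]
    nlinarith [Nat.centralBinom j]
  · have hcb : Nat.centralBinom (j+1) = 2 * (2*j+1).choose j := by
      rw [Nat.centralBinom, show 2*(j+1) = (2*j+1)+1 by omega, Nat.choose_succ_succ']
      have hsymm := Nat.choose_symm (show j+1 ≤ 2*j+1 by omega)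
      rw [show 2*j+1-(j+1) = j by omega] at hsymm
      omega
    have h := wpt_centralBinom_sq (j+1)
    rw [hcb] at h
    subst hj
    have h2 : (2*j+1)/2 = j := by omega
    have h4 : (4:ℕ)^(2*j+1) = 16^j*4 := by
      rw [pow_succ, show 2*j = j+j by omega, h16 j]
    rw [h2, h4]
    rw [show (16:ℕ)^(j+1) = 16^j*16 by ring] at h
    nlinarith [Nat.centralBinom j, (2*j+1).choose j]
lemma wpt_choose_half_real (n : ℕ) :
    (n.choose (n/2) : ℝ) * Real.sqrt (n+1) ≤ Real.sqrt 2 * 2^n := by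
  have h' : ((n.choose (n/2):ℝ))^2 * ((n:ℝ)+1) ≤ 2 * 4^n := by
    exact_mod_cast congrArg (Nat.cast : ℕ → ℝ) rfl ▸ (by exact_mod_cast wpt_choose_half_sq n : ((n.choose (n/2):ℝ))^2 * ((n:ℝ)+1) ≤ 2 * 4^n)
  calc (n.choose (n/2):ℝ) * Real.sqrt ((n:ℝ)+1)
      = Real.sqrt (((n.choose (n/2):ℝ))^2 * ((n:ℝ)+1)) := by
        rw [Real.sqrt_mul (by positivity), Real.sqrt_sq (by positivity)]
  _ ≤ Real.sqrt (2 * 4^n) := Real.sqrt_le_sqrt h'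
  _ = Real.sqrt 2 * 2^n := by
        rw [Real.sqrt_mul (by norm_num)]
        congr 1
        rw [show (4:ℝ)^n = (2^n)^2 by rw [← pow_mul, mul_comm, pow_mul]; norm_num,
          Real.sqrt_sq (by positivity)]

lemma wpt_sqrt_tendsto : Filter.Tendsto (fun n : ℕ => Real.sqrt ((n:ℝ)+1)) Filter.atTop Filter.atTop := by
  rw [Filter.tendsto_atTop_atTop]
  intro b
  refine ⟨⌈b^2⌉₊, fun n hn => ?_⟩
  rcases le_or_gt b 0 with hb | hb
  · exact hb.trans (Real.sqrt_nonneg _)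
  · have h1 : b^2 ≤ (n:ℝ)+1 := by
      have h2 : b^2 ≤ (n:ℝ) := by
        have := (Nat.ceil_le).mp hn
        linarith
      linarith
    calc b = Real.sqrt (b^2) := (Real.sqrt_sq hb.le).symm
    _ ≤ _ := Real.sqrt_le_sqrt h1
theorem winning_prob_threshold (u d : ℝ)
    (hd0 : 0 < d) (hd1 : d ≤ 1) (hu : 1 ≤ u) (hne : u ≠ d) :
    (u * d < 1 → Tendsto (fun n : ℕ => B n u d) atTop (nhds 0)) ∧
    (u * d = 1 → Tendsto (fun n : ℕ => B n u d) atTop (nhds 1)) ∧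
    (1 < u * d → Tendsto (fun n : ℕ => B n u d) atTop (nhds 2)) := by
  have hu0 : (0:ℝ) < u := lt_of_lt_of_le one_pos hu
  have hud : d < u := lt_of_le_of_ne (le_trans hd1 hu) (Ne.symm hne)
  have hL2 : 0 < Real.log (u/d) := Real.log_pos ((one_lt_div hd0).mpr hud)
  have hL1 : 0 ≤ Real.log (1/d) := Real.log_nonneg ((one_le_div hd0).mpr hd1)
  have hL1d : Real.log (1/d) = -Real.log d := by rw [one_div, Real.log_inv]
  have hL2d : Real.log (u/d) = Real.log u - Real.log d :=
    Real.log_div (ne_of_gt hu0) (ne_of_gt hd0)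
  have hx0 : ∀ n : ℕ, 0 ≤ (n:ℝ) * Real.log (1/d) / Real.log (u/d) := fun n => by positivity
  have hfl : ∀ n : ℕ, (ktilde n u d : ℝ) ≤ (n:ℝ) * Real.log (1/d) / Real.log (u/d) := by
    intro n; unfold ktilde; exact Nat.floor_le (hx0 n)
  have hfu : ∀ n : ℕ, (n:ℝ) * Real.log (1/d) / Real.log (u/d) < (ktilde n u d : ℝ) + 1 := by
    intro n; unfold ktilde; exact Nat.lt_floor_add_one _
  have hBnonneg : ∀ n : ℕ, 0 ≤ B n u d := by
    intro n
    unfold B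
    exact mul_nonneg (by positivity) (Finset.sum_nonneg fun k _ => Nat.cast_nonneg _)
  have hpow : ∀ n : ℕ, 1 ≤ n → ((1:ℝ)/2)^(n-1) * 2^n = 2 := by
    intro n hn
    have h2 : (2:ℝ)^n = 2^(n-1)*2 := by
      rw [← pow_succ]; congr 1; omega
    rw [h2, one_div, inv_pow]
    field_simp
  refine ⟨?_, ?_, ?_⟩
  · -- case u*d < 1
    intro h1
    set c : ℝ := (2*Real.log (1/d) - Real.log (u/d)) / Real.log (u/d) with hc_def
    have hnum : 0 < 2*Real.log (1/d) - Real.log (u/d) := by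
      have hlt : Real.log (u*d) < 0 := Real.log_neg (by positivity) h1
      rw [Real.log_mul (ne_of_gt hu0) (ne_of_gt hd0)] at hlt
      rw [hL1d, hL2d]; linarith
    have hc : 0 < c := div_pos hnum hL2
    apply tendsto_of_tendsto_of_tendsto_of_le_of_le' tendsto_const_nhds
      (tendsto_const_div_atTop_nhds_zero_nat (2/c^2))
      (Filter.Eventually.of_forall hBnonneg)
    filter_upwards [Filter.eventually_ge_atTop 1] with n hn
    have hn' : (0:ℝ) < n := by exact_mod_cast hn
    have hsub : Finset.Icc (ktilde n u d + 1) n ⊆ Finset.range (n+1) := by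
      intro k hk; rw [Finset.mem_Icc] at hk; rw [Finset.mem_range]; omega
    have hptk : ∀ k ∈ Finset.Icc (ktilde n u d + 1) n, c * (n:ℝ) ≤ |2*(k:ℝ) - (n:ℝ)| := by
      intro k hk
      rw [Finset.mem_Icc] at hk
      have hk1 : (ktilde n u d : ℝ) + 1 ≤ (k:ℝ) := by exact_mod_cast hk.1
      have hx := hfu n
      have hcn : c*(n:ℝ) = 2*((n:ℝ)*Real.log (1/d)/Real.log (u/d)) - (n:ℝ) := by
        rw [hc_def]; field_simp
      have hle : c*(n:ℝ) ≤ 2*(k:ℝ) - (n:ℝ) := by rw [hcn]; linarith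
      exact hle.trans (le_abs_self _)
    have hkey := wpt_cheb n hn _ hsub hc hptk
    show B n u d ≤ (2/c^2)/(n:ℝ)
    unfold B
    calc ((1:ℝ)/2)^(n-1) * ∑ k ∈ Finset.Icc (ktilde n u d + 1) n, (n.choose k:ℝ)
        ≤ ((1:ℝ)/2)^(n-1) * (2^n/(c^2*(n:ℝ))) :=
          mul_le_mul_of_nonneg_left hkey (by positivity)
    _ = (((1:ℝ)/2)^(n-1) * 2^n)/(c^2*(n:ℝ)) := by ring
    _ = 2/(c^2*(n:ℝ)) := by rw [hpow n hn]
    _ = (2/c^2)/(n:ℝ) := by rw [div_div]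
  · -- case u*d = 1
    intro h2
    have hd1' : d < 1 := by
      rcases lt_or_eq_of_le hd1 with h | h
      · exact h
      · exfalso; apply hne; rw [← h] at h2; nlinarith
    have hL1p : 0 < Real.log (1/d) := Real.log_pos ((one_lt_div hd0).mpr hd1')
    have hL2eq : Real.log (u/d) = 2 * Real.log (1/d) := by
      have hueq : u = 1/d := by field_simp; linarith
      rw [hL2d, hueq, hL1d]; ring
    have hkt : ∀ n : ℕ, ktilde n u d = n/2 := by
      intro n
      unfold ktilde
      rw [hL2eq]
      have hx : (n:ℝ) * Real.log (1/d) / (2*Real.log (1/d)) = (n:ℝ)/2 := by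
        field_simp
      rw [hx]
      have h := Nat.floor_div_natCast ((n:ℝ)) 2
      simpa using h
    have hlow : ∀ n : ℕ, 1 ≤ n →
        1 - Real.sqrt 2 * (Real.sqrt ((n:ℝ)+1))⁻¹ ≤ B n u d ∧ B n u d ≤ 1 := by
      intro n hn
      have hmn : n/2 ≤ n := by omega
      have hsplit := wpt_split n (n/2) hmn
      have hreflect := wpt_reflect n (n/2)
      have hTle : ∑ k ∈ Finset.Icc (n/2+1) n, (n.choose k:ℝ)
          ≤ ∑ k ∈ Finset.range (n/2+1), (n.choose k:ℝ) := by
        rw [hreflect]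
        apply Finset.sum_le_sum_of_subset_of_nonneg
        · apply Finset.range_subset_range.mpr; omega
        · intros; positivity
      have hHle : ∑ k ∈ Finset.range (n/2+1), (n.choose k:ℝ)
          ≤ ∑ k ∈ Finset.Icc (n/2+1) n, (n.choose k:ℝ) + (n.choose (n/2) : ℝ) := by
        rw [hreflect]
        have hsp : ∑ k ∈ Finset.range (n - n/2), (n.choose k:ℝ)
            + ∑ k ∈ Finset.Ico (n - n/2) (n/2+1), (n.choose k:ℝ)
            = ∑ k ∈ Finset.range (n/2+1), (n.choose k:ℝ) := by
          rw [Finset.range_eq_Ico, Finset.sum_Ico_consecutive _ (by omega) (by omega), Finset.range_eq_Ico]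
        have hIco : ∑ k ∈ Finset.Ico (n - n/2) (n/2+1), (n.choose k:ℝ) ≤ (n.choose (n/2):ℝ) := by
          have hsub : Finset.Ico (n - n/2) (n/2+1) ⊆ {n/2} := by
            intro k hk; rw [Finset.mem_Ico] at hk; rw [Finset.mem_singleton]; omega
          calc ∑ k ∈ Finset.Ico (n - n/2) (n/2+1), (n.choose k:ℝ)
              ≤ ∑ k ∈ ({n/2} : Finset ℕ), (n.choose k:ℝ) :=
              Finset.sum_le_sum_of_subset_of_nonneg hsub (by intros; positivity)
          _ = (n.choose (n/2):ℝ) := Finset.sum_singleton _ _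
        linarith
      have hBn : B n u d = ((1:ℝ)/2)^(n-1) * ∑ k ∈ Finset.Icc (n/2+1) n, (n.choose k:ℝ) := by
        unfold B; rw [hkt n]
      have hp := hpow n hn
      have hple : (0:ℝ) < ((1:ℝ)/2)^(n-1) := by positivity
      have h2T : 2 * ∑ k ∈ Finset.Icc (n/2+1) n, (n.choose k:ℝ) ≤ 2^n := by linarith
      have h2T' : (2:ℝ)^n - (n.choose (n/2):ℝ)
          ≤ 2 * ∑ k ∈ Finset.Icc (n/2+1) n, (n.choose k:ℝ) := by linarith
      have hsq : (0:ℝ) < Real.sqrt ((n:ℝ)+1) := Real.sqrt_pos.mpr (by positivity)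
      have hCb : (n.choose (n/2):ℝ) ≤ Real.sqrt 2 * 2^n / Real.sqrt ((n:ℝ)+1) := by
        rw [le_div_iff₀ hsq]; exact wpt_choose_half_real n
      constructor
      · rw [hBn]
        have hC2 : (n.choose (n/2):ℝ) * ((1:ℝ)/2)^(n-1)
            ≤ 2 * (Real.sqrt 2 * (Real.sqrt ((n:ℝ)+1))⁻¹) := by
          calc (n.choose (n/2):ℝ) * ((1:ℝ)/2)^(n-1)
              ≤ (Real.sqrt 2 * 2^n / Real.sqrt ((n:ℝ)+1)) * ((1:ℝ)/2)^(n-1) :=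
                mul_le_mul_of_nonneg_right hCb (le_of_lt hple)
          _ = (Real.sqrt 2 * (((1:ℝ)/2)^(n-1) * 2^n)) * (Real.sqrt ((n:ℝ)+1))⁻¹ := by ring
          _ = 2 * (Real.sqrt 2 * (Real.sqrt ((n:ℝ)+1))⁻¹) := by rw [hp]; ring
        have hTlow := mul_le_mul_of_nonneg_left h2T' (le_of_lt hple)
        linarith [hTlow, hC2, hp]
      · rw [hBn]
        linarith [mul_le_mul_of_nonneg_left h2T (le_of_lt hple), hp]
    have hlim : Tendsto (fun n : ℕ => 1 - Real.sqrt 2 * (Real.sqrt ((n:ℝ)+1))⁻¹) atTop (nhds 1) := by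
      have h0 : Tendsto (fun n : ℕ => (Real.sqrt ((n:ℝ)+1))⁻¹) atTop (nhds 0) :=
        wpt_sqrt_tendsto.inv_tendsto_atTop
      simpa using tendsto_const_nhds.sub (h0.const_mul (Real.sqrt 2))
    apply tendsto_of_tendsto_of_tendsto_of_le_of_le' hlim tendsto_const_nhds
    · filter_upwards [Filter.eventually_ge_atTop 1] with n hn
      exact (hlow n hn).1
    · filter_upwards [Filter.eventually_ge_atTop 1] with n hn
      exact (hlow n hn).2
  · -- case 1 < u*d
    intro h3
    set c : ℝ := (Real.log (u/d) - 2*Real.log (1/d)) / Real.log (u/d) with hc_def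
    have hnum : 0 < Real.log (u/d) - 2*Real.log (1/d) := by
      have hlt : 0 < Real.log (u*d) := Real.log_pos h3
      rw [Real.log_mul (ne_of_gt hu0) (ne_of_gt hd0)] at hlt
      rw [hL1d, hL2d]; linarith
    have hc : 0 < c := div_pos hnum hL2
    apply tendsto_of_tendsto_of_tendsto_of_le_of_le'
      (g := fun n : ℕ => 2 - (2/c^2)/(n:ℝ)) ?_ tendsto_const_nhds ?_ ?_
    · simpa using (tendsto_const_nhds (x := (2:ℝ))).sub (tendsto_const_div_atTop_nhds_zero_nat (2/c^2))
    · filter_upwards [Filter.eventually_ge_atTop 1] with n hn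
      have hn' : (0:ℝ) < n := by exact_mod_cast hn
      have hmlt : ktilde n u d < n := by
        have ha : (ktilde n u d : ℝ) ≤ (n:ℝ)*Real.log (1/d)/Real.log (u/d) := hfl n
        have hb : (n:ℝ)*Real.log (1/d)/Real.log (u/d) < (n:ℝ) := by
          rw [div_lt_iff₀ hL2]
          nlinarith [hnum, hn', hL1]
        exact_mod_cast lt_of_le_of_lt ha hb
      have hsplit := wpt_split n (ktilde n u d) (le_of_lt hmlt)
      have hhead : ∑ k ∈ Finset.range (ktilde n u d + 1), (n.choose k:ℝ) ≤ 2^n/(c^2*(n:ℝ)) := by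
        apply wpt_cheb n hn _ ?_ hc ?_
        · intro k hk; rw [Finset.mem_range] at hk ⊢; omega
        · intro k hk
          rw [Finset.mem_range] at hk
          have hk1 : (k:ℝ) ≤ (ktilde n u d : ℝ) := by exact_mod_cast Nat.lt_succ_iff.mp hk
          have hx := hfl n
          have hcn : c*(n:ℝ) = (n:ℝ) - 2*((n:ℝ)*Real.log (1/d)/Real.log (u/d)) := by
            rw [hc_def]; field_simp
          have hle : c*(n:ℝ) ≤ (n:ℝ) - 2*(k:ℝ) := by rw [hcn]; linarith
          have h6 : (n:ℝ) - 2*(k:ℝ) ≤ |2*(k:ℝ) - (n:ℝ)| := by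
            rw [abs_sub_comm]; exact le_abs_self _
          exact hle.trans h6
      have hBn : B n u d = ((1:ℝ)/2)^(n-1)
          * (2^n - ∑ k ∈ Finset.range (ktilde n u d + 1), (n.choose k:ℝ)) := by
        unfold B; rw [← hsplit]; ring
      rw [hBn]
      have hp := hpow n hn
      have hple : (0:ℝ) < ((1:ℝ)/2)^(n-1) := by positivity
      have h7 : ((1:ℝ)/2)^(n-1) * (2^n/(c^2*(n:ℝ))) = (2/c^2)/(n:ℝ) := by
        have he : ((1:ℝ)/2)^(n-1) * (2^n/(c^2*(n:ℝ)))
            = (((1:ℝ)/2)^(n-1) * 2^n)/(c^2*(n:ℝ)) := by ring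
        rw [he, hp, div_div]
      have h8 := mul_le_mul_of_nonneg_left hhead (le_of_lt hple)
      rw [h7] at h8
      linarith [h8, hp]
    · filter_upwards [Filter.eventually_ge_atTop 1] with n hn
      have hTle : ∑ k ∈ Finset.Icc (ktilde n u d + 1) n, (n.choose k:ℝ) ≤ 2^n := by
        rw [← wpt_sum_choose n]
        apply Finset.sum_le_sum_of_subset_of_nonneg
        · intro k hk; rw [Finset.mem_Icc] at hk; rw [Finset.mem_range]; omega
        · intros; positivity
      have hp := hpow n hn
      have hple : (0:ℝ) ≤ ((1:ℝ)/2)^(n-1) := by positivity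
      unfold B
      linarith [mul_le_mul_of_nonneg_left hTle hple, hp]
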